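/- Let q be a prime power, n a positive integer with n | q - 1, F a finite field with q elements, a ∈ F such that X^n - a is irreducible over F, K = F[X]/(X^n - a), α ∈ K the image of X, b ∈ F nonzero, h = a^((q-1)/n), and g = α + b. Let e < q^n be a natural number with S_q(e) < n and base-q digits e_0, ..., e_{n-1}. If f ∈ F[X] is a polynomial of degree less than n such that f(α) = g^e in K, then f = ∏_{i=0}^{n-1} (h^i X + b)^{e_i} as polynomials in F[X]; in particular f splits completely into linear factors over F. -/

import Mathlib

open Polynomial

private lemma ofDigits_sum_range (q : ℕ) : ∀ (L : List ℕ) (n : ℕ), L.length ≤ n →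
    Nat.ofDigits q L = ∑ i ∈ Finset.range n, L.getD i 0 * q ^ i := by
  intro L
  induction L with
  | nil => intro n _; simp [Nat.ofDigits]
  | cons d t ih =>
    intro n hn
    cases n with
    | zero => simp at hn
    | succ m =>
      rw [Nat.ofDigits_cons, Finset.sum_range_succ',
        ih m (by simpa using hn)]
      simp only [List.getD_cons_succ, List.getD_cons_zero, pow_zero, mul_one, pow_succ,
        Finset.mul_sum]
      rw [add_comm]
      congr 1
      exact Finset.sum_congr rfl fun i _ => by ring

/-- If `f ∈ F[X]` has degree `< n` and represents `g^e` in `K = F[X]/(X^n - a)`, where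
`g = α + b` and `S_q(e) < n`, then `f = ∏ i < n, (h^i X + b)^(e_i)`; in particular `f`
splits completely into linear factors over `F`. -/
theorem rep_eq_prod_linear_of_sum_digits_lt
    (q n : ℕ) (hq : IsPrimePow q) (hn : 0 < n) (hdvd : n ∣ q - 1)
    (F : Type*) [Field F] [Fintype F] (hF : Fintype.card F = q)
    (a : F) (hirr : Irreducible (X ^ n - C a : F[X]))
    (b : F) (hb : b ≠ 0) (h : F) (hh : h = a ^ ((q - 1) / n))
    (e : ℕ) (he : e < q ^ n) (hs : (Nat.digits q e).sum < n)
    (f : F[X]) (hdeg : f.degree < n)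
    (hf : Polynomial.aeval (AdjoinRoot.root (X ^ n - C a : F[X])) f =
      (AdjoinRoot.root (X ^ n - C a : F[X]) + AdjoinRoot.of (X ^ n - C a : F[X]) b) ^ e) :
    f = ∏ i ∈ Finset.range n, (C (h ^ i) * X + C b) ^ ((Nat.digits q e).getD i 0) ∧
      (f.map (RingHom.id F)).Splits := by
  classical
  have hq1 : 1 < q := hq.one_lt
  set L := Nat.digits q e with hL
  haveI hFact : Fact (Irreducible (X ^ n - C a : F[X])) := ⟨hirr⟩
  set α : AdjoinRoot (X ^ n - C a : F[X]) := AdjoinRoot.root _ with hα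
  set φ : F →+* AdjoinRoot (X ^ n - C a : F[X]) := AdjoinRoot.of _ with hφ
  set p := ringChar F with hp
  haveI : CharP F p := ringChar.charP F
  obtain ⟨s, hpprime, hcard⟩ := FiniteField.card F p
  haveI : Fact p.Prime := ⟨hpprime⟩
  have hqp : q = p ^ (s : ℕ) := by rw [← hF, hcard]
  haveI : CharP (AdjoinRoot (X ^ n - C a : F[X])) p :=
    charP_of_injective_algebraMap (algebraMap F (AdjoinRoot (X ^ n - C a : F[X]))).injective p
  have halg : algebraMap F (AdjoinRoot (X ^ n - C a : F[X])) = φ := AdjoinRoot.algebraMap_eq _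
  have hfrobK : ∀ x y : AdjoinRoot (X ^ n - C a : F[X]), (x + y) ^ q = x ^ q + y ^ q := by
    intro x y; rw [hqp]; exact add_pow_char_pow x y p s
  have hFq : ∀ x : F, x ^ q = x := by intro x; rw [← hF]; exact FiniteField.pow_card x
  have hαn : α ^ n = φ a := by
    have h0 : (aeval α) ((X : F[X]) ^ n - C a) = 0 := by
      rw [AdjoinRoot.aeval_eq]; exact AdjoinRoot.mk_self
    rw [map_sub, map_pow, aeval_X, aeval_C, sub_eq_zero, halg] at h0
    exact h0
  have hαq : α ^ q = φ h * α := by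
    have hq' : q = n * ((q - 1) / n) + 1 := by
      rw [Nat.mul_div_cancel' hdvd]; omega
    rw [hq', pow_succ, pow_mul, hαn, ← map_pow, ← hh]
  have key : ∀ i : ℕ, (α + φ b) ^ (q ^ i) = φ (h ^ i) * α + φ b := by
    intro i
    induction i with
    | zero => simp
    | succ i ih =>
      rw [pow_succ, pow_mul, ih, hfrobK, mul_pow, ← map_pow, ← map_pow, hFq, hFq, hαq,
        ← mul_assoc, ← map_mul, ← pow_succ]
  have hlen : L.length ≤ n := by
    rcases Nat.eq_zero_or_pos e with rfl | he0
    · simp [hL]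
    · rw [hL, Nat.digits_len q e hq1 he0.ne']
      have : Nat.log q e < n := Nat.log_lt_of_lt_pow he0.ne' he
      omega
  have hesum : e = ∑ i ∈ Finset.range n, L.getD i 0 * q ^ i := by
    conv_lhs => rw [← Nat.ofDigits_digits q e]
    exact ofDigits_sum_range q L n hlen
  have hsum : ∑ i ∈ Finset.range n, L.getD i 0 = L.sum := by
    have h1 := ofDigits_sum_range 1 L n hlen
    simpa [Nat.ofDigits_one] using h1.symm
  set P : F[X] := ∏ i ∈ Finset.range n, (C (h ^ i) * X + C b) ^ (L.getD i 0) with hP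
  have hPa : aeval α P = (α + φ b) ^ e := by
    rw [hP, map_prod, hesum]
    rw [show ((α + φ b) ^ ∑ i ∈ Finset.range n, L.getD i 0 * q ^ i)
        = ∏ i ∈ Finset.range n, (α + φ b) ^ (L.getD i 0 * q ^ i) from
      (Finset.prod_pow_eq_pow_sum _ _ _).symm]
    refine Finset.prod_congr rfl fun i _ => ?_
    rw [map_pow, mul_comm (L.getD i 0), pow_mul, key i]
    congr 1
    simp [halg]
  have hdegP : P.degree < (n : WithBot ℕ) := by
    have h1 : ∀ i ∈ Finset.range n,
        ((C (h ^ i) * X + C b) ^ (L.getD i 0)).degree ≤ (L.getD i 0 : WithBot ℕ) := by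
      intro i _
      refine (degree_pow_le _ _).trans ?_
      have h2 : (L.getD i 0) • (C (h ^ i) * X + C b).degree
          ≤ (L.getD i 0) • (1 : WithBot ℕ) :=
        nsmul_le_nsmul_right degree_linear_le _
      refine h2.trans_eq ?_
      simp [nsmul_eq_mul]
    have h2 : P.degree ≤ ∑ i ∈ Finset.range n,
        (fun j => ((L.getD j 0 : ℕ) : WithBot ℕ)) i :=
      (degree_prod_le _ _).trans (Finset.sum_le_sum h1)
    refine h2.trans_lt ?_
    rw [← Nat.cast_sum, hsum]
    exact_mod_cast hs
  have hfP : f = P := by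
    have h0 : aeval α (f - P) = 0 := by rw [map_sub, hf, hPa, sub_eq_zero]
    rw [AdjoinRoot.aeval_eq, AdjoinRoot.mk_eq_zero] at h0
    have h2 : f - P = 0 := by
      refine Polynomial.eq_zero_of_dvd_of_degree_lt h0 ?_
      rw [degree_X_pow_sub_C hn]
      exact lt_of_le_of_lt (degree_sub_le f P) (max_lt hdeg hdegP)
    exact sub_eq_zero.mp h2
  refine ⟨hfP, ?_⟩
  rw [hfP, hP, Polynomial.map_id]
  exact Splits.prod fun i _ => Splits.pow (Splits.of_degree_le_one degree_linear_le) _
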